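/- Under the weight setting, for f:[a,b]×[c,d]→ℝ smooth with |∂²f/∂t∂s| ≤ M everywhere, for all (x,y)∈[a,b]×[c,d]: |f(x,y) - (1/m(a,b))∫_a^b w(t)f(t,y)dt - (1/m(c,d))∫_c^d w(s)f(x,s)ds + (1/(m(a,b)m(c,d)))∫_a^b∫_c^d w(t)w(s)f(t,s)ds dt| ≤ A(x)B(y)·M/(m(a,b)m(c,d)), where A(x)=∫_a^x (x-u)w(u)du + ∫_x^b (u-x)w(u)du and B(y)=∫_c^y (y-u)w(u)du + ∫_y^d (u-y)w(u)du. -/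

import Mathlib

open Set MeasureTheory intervalIntegral

lemma wos_slice1 {F : ℝ → ℝ → ℝ} {s u : Set ℝ}
    (hF : ContinuousOn (fun p : ℝ × ℝ => F p.1 p.2) (s ×ˢ u)) {y : ℝ} (hy : y ∈ u) :
    ContinuousOn (fun t => F t y) s :=
  hF.comp ((continuous_id.prodMk continuous_const).continuousOn)
    (fun t ht => Set.mk_mem_prod ht hy)

lemma wos_slice2 {F : ℝ → ℝ → ℝ} {s u : Set ℝ}
    (hF : ContinuousOn (fun p : ℝ × ℝ => F p.1 p.2) (s ×ˢ u)) {x : ℝ} (hx : x ∈ s) :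
    ContinuousOn (fun t => F x t) u :=
  hF.comp ((continuous_const.prodMk continuous_id).continuousOn)
    (fun t ht => Set.mk_mem_prod hx ht)

lemma wos_param (a' b' c' d' : ℝ) (w : ℝ → ℝ) (hw : IntervalIntegrable w volume c' d')
    (F : ℝ → ℝ → ℝ)
    (hF : ContinuousOn (fun p : ℝ × ℝ => F p.1 p.2) (Icc a' b' ×ˢ uIcc c' d')) :
    ContinuousOn (fun t => ∫ s in c'..d', w s * F t s) (Icc a' b') := by
  obtain ⟨C, hC⟩ := (isCompact_Icc.prod isCompact_uIcc).exists_bound_of_continuousOn hF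
  intro t₀ ht₀
  apply continuousWithinAt_of_dominated_interval (bound := fun s => |w s| * C)
  · filter_upwards [eventually_mem_nhdsWithin] with t ht
    exact ((intervalIntegrable_iff.mp hw).aestronglyMeasurable).mul
      (((wos_slice2 hF ht).mono uIoc_subset_uIcc).aestronglyMeasurable measurableSet_uIoc)
  · filter_upwards [eventually_mem_nhdsWithin] with t ht
    refine Filter.Eventually.of_forall (fun s hs => ?_)
    rw [Real.norm_eq_abs, abs_mul]
    have hb : |F t s| ≤ C := by
      simpa [Real.norm_eq_abs] using hC (t, s) (Set.mk_mem_prod ht (uIoc_subset_uIcc hs))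
    exact mul_le_mul_of_nonneg_left hb (abs_nonneg _)
  · exact hw.abs.mul_const C
  · refine Filter.Eventually.of_forall (fun s hs => ?_)
    exact (continuousWithinAt_const.mul
      ((wos_slice1 hF (uIoc_subset_uIcc hs)).continuousWithinAt ht₀))

theorem weighted_ostrowski_double (a b c d M : ℝ) (hab : a < b) (hcd : c < d)
    (w : ℝ → ℝ) (hw0 : ∀ u ∈ Icc a b ∪ Icc c d, 0 ≤ w u)
    (hwab : IntervalIntegrable w volume a b)
    (hwcd : IntervalIntegrable w volume c d)
    (hmab : 0 < ∫ u in a..b, w u) (hmcd : 0 < ∫ u in c..d, w u)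
    (f fx fxy : ℝ → ℝ → ℝ)
    (hfc : ContinuousOn (fun p : ℝ × ℝ => f p.1 p.2) (Icc a b ×ˢ Icc c d))
    (hfx : ∀ x ∈ Icc a b, ∀ y ∈ Icc c d, HasDerivAt (fun t => f t y) (fx x y) x)
    (hfxy : ∀ x ∈ Icc a b, ∀ y ∈ Icc c d, HasDerivAt (fun s => fx x s) (fxy x y) y)
    (hfxyc : ContinuousOn (fun p : ℝ × ℝ => fxy p.1 p.2) (Icc a b ×ˢ Icc c d))
    (hM : ∀ x ∈ Icc a b, ∀ y ∈ Icc c d, |fxy x y| ≤ M) :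
    ∀ x ∈ Icc a b, ∀ y ∈ Icc c d,
      |f x y - (1 / ∫ u in a..b, w u) * (∫ t in a..b, w t * f t y) -
          (1 / ∫ u in c..d, w u) * (∫ s in c..d, w s * f x s) +
          (1 / ((∫ u in a..b, w u) * ∫ u in c..d, w u)) *
            ∫ t in a..b, ∫ s in c..d, w t * w s * f t s| ≤
        ((∫ u in a..x, (x - u) * w u) + ∫ u in x..b, (u - x) * w u) *
          ((∫ u in c..y, (y - u) * w u) + ∫ u in y..d, (u - y) * w u) * M /
          ((∫ u in a..b, w u) * ∫ u in c..d, w u) := by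
  intro x hx y hy
  obtain ⟨hax, hxb⟩ := hx
  obtain ⟨hcy, hyd⟩ := hy
  have hx : x ∈ Icc a b := ⟨hax, hxb⟩
  have hy : y ∈ Icc c d := ⟨hcy, hyd⟩
  have hab' : a ≤ b := hab.le
  have hcd' : c ≤ d := hcd.le
  have hiab : uIcc a b = Icc a b := uIcc_of_le hab'
  have hicd : uIcc c d = Icc c d := uIcc_of_le hcd'
  have hw1 : ∀ u ∈ Icc a b, 0 ≤ w u := fun u hu => hw0 u (Set.mem_union_left _ hu)
  have hw2 : ∀ u ∈ Icc c d, 0 ≤ w u := fun u hu => hw0 u (Set.mem_union_right _ hu)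
  set m₁ := ∫ u in a..b, w u with hm₁def
  set m₂ := ∫ u in c..d, w u with hm₂def
  -- basic integrability
  have hint_fy : IntervalIntegrable (fun t => w t * f t y) volume a b :=
    hwab.mul_continuousOn (hiab ▸ wos_slice1 hfc hy)
  have hint_fx : IntervalIntegrable (fun s => w s * f x s) volume c d :=
    hwcd.mul_continuousOn (hicd ▸ wos_slice2 hfc hx)
  set H : ℝ → ℝ := fun t => ∫ s in c..d, w s * f t s with hHdef
  have hHcont : ContinuousOn H (Icc a b) :=
    wos_param a b c d w hwcd f (by rw [hicd]; exact hfc)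
  have hint_H : IntervalIntegrable (fun t => w t * H t) volume a b :=
    hwab.mul_continuousOn (hiab ▸ hHcont)
  -- the key pointwise bound
  have hD : ∀ t ∈ Icc a b, ∀ s ∈ Icc c d,
      |f x y - f t y - f x s + f t s| ≤ M * |x - t| * |y - s| := by
    intro t ht s hs
    have hsub : uIcc s y ⊆ Icc c d := by
      rw [← hicd]; exact uIcc_subset_uIcc (hicd ▸ hs) (hicd ▸ hy)
    have hsub2 : uIcc t x ⊆ Icc a b := by
      rw [← hiab]; exact uIcc_subset_uIcc (hiab ▸ ht) (hiab ▸ hx)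
    set G : ℝ → ℝ := fun u => ∫ v in s..y, fxy u v with hGdef
    have hGval : ∀ u ∈ Icc a b, G u = fx u y - fx u s := by
      intro u hu
      exact integral_eq_sub_of_hasDerivAt (fun v hv => hfxy u hu v (hsub hv))
        (((wos_slice2 hfxyc hu).mono hsub).intervalIntegrable)
    have hGcont : ContinuousOn G (Icc a b) := by
      have := wos_param a b s y (fun _ => (1:ℝ)) intervalIntegrable_const fxy
        (hfxyc.mono (Set.prod_mono Set.Subset.rfl hsub))
      simpa only [one_mul] using this
    have hGbound : ∀ u ∈ Icc a b, |G u| ≤ M * |y - s| := by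
      intro u hu
      have := intervalIntegral.norm_integral_le_of_norm_le_const (C := M)
        (f := fun v => fxy u v) (a := s) (b := y)
        (fun v hv => by simpa [Real.norm_eq_abs] using hM u hu v (hsub (uIoc_subset_uIcc hv)))
      simpa [Real.norm_eq_abs] using this
    have key : f x y - f t y - f x s + f t s = ∫ u in t..x, G u := by
      have h1 : ∀ u ∈ uIcc t x, HasDerivAt (fun u => f u y - f u s) (G u) u := by
        intro u hu
        rw [hGval u (hsub2 hu)]
        exact (hfx u (hsub2 hu) y hy).sub (hfx u (hsub2 hu) s hs)
      have h2 : IntervalIntegrable G volume t x := (hGcont.mono hsub2).intervalIntegrable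
      have := integral_eq_sub_of_hasDerivAt h1 h2
      rw [this]; ring
    rw [key]
    have := intervalIntegral.norm_integral_le_of_norm_le_const (C := M * |y - s|)
      (f := G) (a := t) (b := x)
      (fun u hu => by simpa [Real.norm_eq_abs] using hGbound u (hsub2 (uIoc_subset_uIcc hu)))
    rw [Real.norm_eq_abs] at this
    calc |∫ u in t..x, G u| ≤ M * |y - s| * |x - t| := this
      _ = M * |x - t| * |y - s| := by ring
  -- J and its properties
  set J : ℝ → ℝ := fun t => (f x y - f t y) * m₂ - H x + H t with hJdef
  have hJeq : ∀ t ∈ Icc a b,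
      J t = ∫ s in c..d, w s * (f x y - f t y - f x s + f t s) := by
    intro t ht
    have hft : IntervalIntegrable (fun s => w s * f t s) volume c d :=
      hwcd.mul_continuousOn (hicd ▸ wos_slice2 hfc ht)
    have e : (fun s => w s * (f x y - f t y - f x s + f t s))
        = fun s => (w s * (f x y - f t y) - w s * f x s) + w s * f t s := by
      funext s; ring
    rw [e, intervalIntegral.integral_add ((hwcd.mul_const _).sub hint_fx) hft,
      intervalIntegral.integral_sub (hwcd.mul_const _) hint_fx,
      intervalIntegral.integral_mul_const]
    simp only [hJdef, hHdef]
    ring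
  have hJcont : ContinuousOn J (Icc a b) :=
    (((continuousOn_const.sub (wos_slice1 hfc hy)).mul continuousOn_const).sub
      continuousOn_const).add hHcont
  have hint_J : IntervalIntegrable (fun t => w t * J t) volume a b :=
    hwab.mul_continuousOn (hiab ▸ hJcont)
  -- bound on J
  set B' : ℝ := ∫ s in c..d, |y - s| * w s with hB'def
  set A' : ℝ := ∫ t in a..b, |x - t| * w t with hA'def
  have hJbound : ∀ t ∈ Icc a b, |J t| ≤ M * |x - t| * B' := by
    intro t ht
    rw [hJeq t ht]
    have contD : ContinuousOn (fun s => f x y - f t y - f x s + f t s) (uIcc c d) := by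
      rw [hicd]
      exact (continuousOn_const.sub (wos_slice2 hfc hx)).add (wos_slice2 hfc ht)
    have i1 : IntervalIntegrable (fun s => |w s * (f x y - f t y - f x s + f t s)|)
        volume c d := (hwcd.mul_continuousOn contD).abs
    have i2 : IntervalIntegrable (fun s => (M * |x - t|) * (|y - s| * w s)) volume c d :=
      (hwcd.continuousOn_mul (continuous_const.sub continuous_id).abs.continuousOn).const_mul _
    calc |∫ s in c..d, w s * (f x y - f t y - f x s + f t s)|
        ≤ ∫ s in c..d, |w s * (f x y - f t y - f x s + f t s)| :=
          intervalIntegral.abs_integral_le_integral_abs hcd'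
      _ ≤ ∫ s in c..d, (M * |x - t|) * (|y - s| * w s) := by
          apply intervalIntegral.integral_mono_on hcd' i1 i2
          intro s hs
          rw [abs_mul, abs_of_nonneg (hw2 s hs)]
          calc w s * |f x y - f t y - f x s + f t s|
              ≤ w s * (M * |x - t| * |y - s|) :=
                mul_le_mul_of_nonneg_left (hD t ht s hs) (hw2 s hs)
            _ = M * |x - t| * (|y - s| * w s) := by ring
      _ = M * |x - t| * B' := by
          rw [intervalIntegral.integral_const_mul]
  -- bound on the full integral
  have hIbound : |∫ t in a..b, w t * J t| ≤ M * A' * B' := by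
    have hB'nonneg : 0 ≤ B' :=
      intervalIntegral.integral_nonneg hcd'
        (fun s hs => mul_nonneg (abs_nonneg _) (hw2 s hs))
    have i1 : IntervalIntegrable (fun t => |w t * J t|) volume a b := hint_J.abs
    have i2 : IntervalIntegrable (fun t => (M * B') * (|x - t| * w t)) volume a b :=
      (hwab.continuousOn_mul (continuous_const.sub continuous_id).abs.continuousOn).const_mul _
    calc |∫ t in a..b, w t * J t|
        ≤ ∫ t in a..b, |w t * J t| := intervalIntegral.abs_integral_le_integral_abs hab'
      _ ≤ ∫ t in a..b, (M * B') * (|x - t| * w t) := by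
          apply intervalIntegral.integral_mono_on hab' i1 i2
          intro t ht
          rw [abs_mul, abs_of_nonneg (hw1 t ht)]
          calc w t * |J t| ≤ w t * (M * |x - t| * B') :=
                mul_le_mul_of_nonneg_left (hJbound t ht) (hw1 t ht)
            _ = M * B' * (|x - t| * w t) := by ring
      _ = M * B' * A' := by rw [intervalIntegral.integral_const_mul]
      _ = M * A' * B' := by ring
  -- identity for the integral of w * J
  have hwHeq : ∀ t : ℝ, w t * H t = ∫ s in c..d, w t * w s * f t s := by
    intro t
    rw [show (fun s => w t * w s * f t s) = fun s => w t * (w s * f t s) from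
      funext fun s => by ring, intervalIntegral.integral_const_mul]
  have hI : (∫ t in a..b, w t * J t)
      = m₁ * m₂ * f x y - m₂ * (∫ t in a..b, w t * f t y) - m₁ * H x
        + ∫ t in a..b, ∫ s in c..d, w t * w s * f t s := by
    have e : (fun t => w t * J t)
        = fun t => (((f x y * m₂ - H x) * w t - m₂ * (w t * f t y)) + w t * H t) := by
      funext t; simp only [hJdef]; ring
    rw [e, intervalIntegral.integral_add
        (((hwab.const_mul _).sub (hint_fy.const_mul _))) hint_H,
      intervalIntegral.integral_sub (hwab.const_mul _) (hint_fy.const_mul _),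
      intervalIntegral.integral_const_mul, intervalIntegral.integral_const_mul,
      intervalIntegral.integral_congr (fun t _ => hwHeq t)]
    ring
  -- disintegrate the error expression
  have hHx : (∫ s in c..d, w s * f x s) = H x := rfl
  have hE : f x y - (1 / m₁) * (∫ t in a..b, w t * f t y)
      - (1 / m₂) * (∫ s in c..d, w s * f x s)
      + (1 / (m₁ * m₂)) * (∫ t in a..b, ∫ s in c..d, w t * w s * f t s)
      = (∫ t in a..b, w t * J t) / (m₁ * m₂) := by
    rw [hI, hHx]
    field_simp
  -- splitting A' and B'
  have hA : A' = (∫ u in a..x, (x - u) * w u) + ∫ u in x..b, (u - x) * w u := by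
    have i1 : IntervalIntegrable (fun u => |x - u| * w u) volume a x :=
      (hwab.mono_set (uIcc_subset_uIcc left_mem_uIcc (hiab ▸ hx))).continuousOn_mul
        (continuous_const.sub continuous_id).abs.continuousOn
    have i2 : IntervalIntegrable (fun u => |x - u| * w u) volume x b :=
      (hwab.mono_set (uIcc_subset_uIcc (hiab ▸ hx) right_mem_uIcc)).continuousOn_mul
        (continuous_const.sub continuous_id).abs.continuousOn
    rw [hA'def, ← intervalIntegral.integral_add_adjacent_intervals i1 i2]
    congr 1
    · apply intervalIntegral.integral_congr
      intro u hu
      rw [uIcc_of_le hax] at hu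
      show |x - u| * w u = (x - u) * w u
      rw [abs_of_nonneg (by linarith [hu.2] : (0:ℝ) ≤ x - u)]
    · apply intervalIntegral.integral_congr
      intro u hu
      rw [uIcc_of_le hxb] at hu
      show |x - u| * w u = (u - x) * w u
      rw [abs_of_nonpos (by linarith [hu.1] : x - u ≤ 0)]
      ring_nf
  have hB : B' = (∫ u in c..y, (y - u) * w u) + ∫ u in y..d, (u - y) * w u := by
    have i1 : IntervalIntegrable (fun u => |y - u| * w u) volume c y :=
      (hwcd.mono_set (uIcc_subset_uIcc left_mem_uIcc (hicd ▸ hy))).continuousOn_mul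
        (continuous_const.sub continuous_id).abs.continuousOn
    have i2 : IntervalIntegrable (fun u => |y - u| * w u) volume y d :=
      (hwcd.mono_set (uIcc_subset_uIcc (hicd ▸ hy) right_mem_uIcc)).continuousOn_mul
        (continuous_const.sub continuous_id).abs.continuousOn
    rw [hB'def, ← intervalIntegral.integral_add_adjacent_intervals i1 i2]
    congr 1
    · apply intervalIntegral.integral_congr
      intro u hu
      rw [uIcc_of_le hcy] at hu
      show |y - u| * w u = (y - u) * w u
      rw [abs_of_nonneg (by linarith [hu.2] : (0:ℝ) ≤ y - u)]
    · apply intervalIntegral.integral_congr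
      intro u hu
      rw [uIcc_of_le hyd] at hu
      show |y - u| * w u = (u - y) * w u
      rw [abs_of_nonpos (by linarith [hu.1] : y - u ≤ 0)]
      ring_nf
  -- conclude
  rw [hE, abs_div, abs_of_pos (mul_pos hmab hmcd), ← hA, ← hB]
  have h1 : |∫ t in a..b, w t * J t| ≤ A' * B' * M := hIbound.trans_eq (by ring)
  exact div_le_div_of_nonneg_right h1 (mul_pos hmab hmcd).le
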